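/- Let (K, K^∨) be a pair of dual reflexive Gorenstein cones. Then the set of lattice points in the topological interior of K^∨ equals deg^∨ + (K^∨ ∩ {lattice points}); that is, a lattice point p lies in the interior of K^∨ if and only if p − deg^∨ ∈ K^∨. -/

import Mathlib

open scoped BigOperators Pointwise

noncomputable section

/-- The standard pairing `⟨x, y⟩ = ∑ i, x i * y i` on `ℝ^d`. -/
def pairR {d : ℕ} (x y : Fin d → ℝ) : ℝ := ∑ i, x i * y i

/-- A point of `ℝ^d` is a lattice point if all of its coordinates are integers. -/
def IsLatticePoint {d : ℕ} (x : Fin d → ℝ) : Prop := ∀ i, ∃ z : ℤ, x i = (z : ℝ)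

/-- The dual cone `K^∨ = {y : ⟨x, y⟩ ≥ 0 for all x ∈ K}`. -/
def dualCone {d : ℕ} (K : Set (Fin d → ℝ)) : Set (Fin d → ℝ) :=
  { y | ∀ x ∈ K, 0 ≤ pairR x y }

/-- A Gorenstein cone with degree element `n` (a lattice point): the set of all
nonnegative real linear combinations of a finite set of lattice points, each pairing
to `1` with `n`, such that `K ∩ (−K) = {0}` and `span K = ℝ^d`. -/
def IsGorensteinCone {d : ℕ} (K : Set (Fin d → ℝ)) (n : Fin d → ℝ) : Prop :=
  IsLatticePoint n ∧
  (∃ S : Finset (Fin d → ℝ),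
      (∀ v ∈ S, IsLatticePoint v ∧ pairR v n = 1) ∧
      K = { x | ∃ c : (Fin d → ℝ) → ℝ, (∀ v, 0 ≤ c v) ∧ x = ∑ v ∈ S, c v • v }) ∧
  K ∩ (-K) = {0} ∧
  Submodule.span ℝ K = ⊤

/-- `K_(1)`: the lattice points `m ∈ K` with `⟨m, deg^∨⟩ = 1`. -/
def Kone {d : ℕ} (K : Set (Fin d → ℝ)) (degVee : Fin d → ℝ) : Set (Fin d → ℝ) :=
  { m | IsLatticePoint m ∧ m ∈ K ∧ pairR m degVee = 1 }

/-- `K^∨_(1)`: the lattice points `n ∈ K^∨` with `⟨deg, n⟩ = 1`. -/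
def KvOne {d : ℕ} (K : Set (Fin d → ℝ)) (deg : Fin d → ℝ) : Set (Fin d → ℝ) :=
  { n | IsLatticePoint n ∧ n ∈ dualCone K ∧ pairR deg n = 1 }

lemma pairR_sum {d : ℕ} (S : Finset (Fin d → ℝ)) (f : (Fin d → ℝ) → (Fin d → ℝ))
    (y : Fin d → ℝ) : pairR (∑ v ∈ S, f v) y = ∑ v ∈ S, pairR (f v) y := by
  simp only [pairR, Finset.sum_apply, Finset.sum_mul]
  rw [Finset.sum_comm]

lemma pairR_smul {d : ℕ} (c : ℝ) (v y : Fin d → ℝ) :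
    pairR (c • v) y = c * pairR v y := by
  simp [pairR, Finset.mul_sum, mul_assoc]

lemma pairR_sub_right {d : ℕ} (x y z : Fin d → ℝ) :
    pairR x (y - z) = pairR x y - pairR x z := by
  simp [pairR, mul_sub, Finset.sum_sub_distrib]

lemma pairR_smul_right {d : ℕ} (c : ℝ) (x v : Fin d → ℝ) :
    pairR x (c • v) = c * pairR x v := by
  rw [pairR, pairR, Finset.mul_sum]
  exact Finset.sum_congr rfl fun i _ => by simp [mul_comm, mul_left_comm]

lemma pairR_int {d : ℕ} {x y : Fin d → ℝ} (hx : IsLatticePoint x)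
    (hy : IsLatticePoint y) : ∃ N : ℤ, pairR x y = (N : ℝ) := by
  choose zx hzx using hx
  choose zy hzy using hy
  refine ⟨∑ i, zx i * zy i, ?_⟩
  rw [pairR]
  push_cast
  exact Finset.sum_congr rfl fun i _ => by rw [hzx, hzy]

lemma pairR_abs_le {d : ℕ} (v u : Fin d → ℝ) :
    |pairR v u| ≤ (∑ i, |v i|) * ‖u‖ := by
  rw [pairR]
  calc |∑ i, v i * u i| ≤ ∑ i, |v i * u i| := Finset.abs_sum_le_sum_abs _ _
    _ ≤ ∑ i, |v i| * ‖u‖ := by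
        refine Finset.sum_le_sum fun i _ => ?_
        rw [abs_mul]
        exact mul_le_mul_of_nonneg_left
          ((Real.norm_eq_abs (u i)) ▸ norm_le_pi_norm u i) (abs_nonneg _)
    _ = (∑ i, |v i|) * ‖u‖ := (Finset.sum_mul _ _ _).symm

/-- For a pair of dual reflexive Gorenstein cones `(K, K^∨)`, a lattice
point `p` lies in the topological interior of `K^∨` if and only if `p − deg^∨ ∈ K^∨`. -/
theorem stmt7 {d : ℕ} (K : Set (Fin d → ℝ)) (deg degVee : Fin d → ℝ)
    (hK : IsGorensteinCone K degVee) (hKv : IsGorensteinCone (dualCone K) deg)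
    (p : Fin d → ℝ) (hp : IsLatticePoint p) :
    p ∈ interior (dualCone K) ↔ p - degVee ∈ dualCone K := by
  obtain ⟨hdVlat, ⟨S, hS, hKdef⟩, hpointed, hspan⟩ := hK
  -- each generator is in K
  have hvK : ∀ v ∈ S, v ∈ K := by
    intro v hv
    rw [hKdef]
    refine ⟨fun w => if w = v then 1 else 0, fun w => by by_cases h : w = v <;> simp [h], ?_⟩
    simp [ite_smul, Finset.sum_ite_eq', hv]
  -- membership in dualCone K follows from generator inequalities
  have hdual_of_gen : ∀ y : Fin d → ℝ, (∀ v ∈ S, 0 ≤ pairR v y) → y ∈ dualCone K := by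
    intro y hy x hx
    rw [hKdef] at hx
    obtain ⟨c, hc, rfl⟩ := hx
    rw [pairR_sum]
    exact Finset.sum_nonneg fun v hv => by
      rw [pairR_smul]; exact mul_nonneg (hc v) (hy v hv)
  constructor
  · intro hpint
    rw [mem_interior_iff_mem_nhds, Metric.mem_nhds_iff] at hpint
    obtain ⟨ε, hε, hball⟩ := hpint
    refine hdual_of_gen _ fun v hv => ?_
    obtain ⟨hvlat, hv1⟩ := hS v hv
    have hv0 : v ≠ 0 := by
      rintro rfl
      simp [pairR] at hv1
    obtain ⟨i, hi⟩ := Function.ne_iff.mp hv0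
    have hvv : 0 < pairR v v :=
      Finset.sum_pos' (fun j _ => mul_self_nonneg _)
        ⟨i, Finset.mem_univ i, mul_self_pos.mpr (by simpa using hi)⟩
    set t : ℝ := ε / (2 * (‖v‖ + 1)) with ht
    have hnv : (0:ℝ) < ‖v‖ + 1 := by positivity
    have htpos : 0 < t := by positivity
    have hq : p - t • v ∈ Metric.ball p ε := by
      rw [Metric.mem_ball, dist_eq_norm]
      have : p - t • v - p = -(t • v) := by abel
      rw [this, norm_neg, norm_smul, Real.norm_eq_abs, abs_of_pos htpos]
      calc t * ‖v‖ ≤ t * (‖v‖ + 1) := by nlinarith [norm_nonneg v]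
        _ = ε / 2 := by rw [ht]; field_simp
        _ < ε := by linarith
    have hq' : 0 ≤ pairR v (p - t • v) := hball hq v (hvK v hv)
    rw [pairR_sub_right, pairR_smul_right] at hq'
    have hvp_pos : 0 < pairR v p := by
      have h2 : 0 < t * pairR v v := mul_pos htpos hvv
      linarith
    obtain ⟨N, hN⟩ := pairR_int hvlat hp
    have hN1 : (1:ℝ) ≤ pairR v p := by
      rw [hN] at hvp_pos ⊢
      exact_mod_cast Int.cast_pos.mp hvp_pos
    rw [pairR_sub_right, hv1]
    linarith
  · intro hpd
    rw [mem_interior_iff_mem_nhds, Metric.mem_nhds_iff]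
    set T : ℝ := ∑ v ∈ S, ∑ i, |v i| with hT
    have hT0 : 0 ≤ T :=
      Finset.sum_nonneg fun v _ => Finset.sum_nonneg fun i _ => abs_nonneg _
    refine ⟨1 / (1 + T), by positivity, fun q hq => ?_⟩
    rw [Metric.mem_ball, dist_eq_norm] at hq
    refine hdual_of_gen _ fun v hv => ?_
    obtain ⟨hvlat, hv1⟩ := hS v hv
    -- pairR v p ≥ 1
    have h1 : 0 ≤ pairR v (p - degVee) := hpd v (hvK v hv)
    rw [pairR_sub_right, hv1] at h1
    -- |pairR v (q - p)| small
    have hb : |pairR v (q - p)| ≤ (∑ i, |v i|) * ‖q - p‖ := pairR_abs_le v (q - p)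
    have hvsum : ∑ i, |v i| ≤ T :=
      Finset.single_le_sum (f := fun v => ∑ i, |v i|)
        (fun w _ => Finset.sum_nonneg fun i _ => abs_nonneg _) hv
    have hsmall : |pairR v (q - p)| < 1 := by
      calc |pairR v (q - p)| ≤ (∑ i, |v i|) * ‖q - p‖ := hb
        _ ≤ T * (1 / (1 + T)) := by
            apply mul_le_mul hvsum (le_of_lt hq) (norm_nonneg _) hT0
        _ < 1 := by
            rw [mul_one_div, div_lt_one (by positivity)]
            linarith
    have : pairR v q = pairR v p + pairR v (q - p) := by
      rw [pairR_sub_right]; ring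
    rw [this]
    have := abs_lt.mp hsmall
    linarith
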